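/- Let A and B be metric spaces, let φ₁ : A × B → [0,∞) be a measurable function in class IC(A,B), and let φ₂ : A → (0,∞) be lower semicontinuous and strictly positive everywhere. Then the product function φ(a,b) := φ₁(a,b)·φ₂(a) is also in class IC(A,B). -/

import Mathlib

open MeasureTheory Topology TopologicalSpace

noncomputable section

/-- Class `IC(A,B)` (two-variable form): for every `M > 0` and every compact `K ⊆ A`
there is a compact `L ⊆ B` such that `φ ≥ M` on `K × Lᶜ`. -/
def ClassIC2 {A B : Type*} [TopologicalSpace A] [TopologicalSpace B]
    (φ : A → B → ℝ) : Prop :=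
  ∀ M : ℝ, 0 < M → ∀ K : Set A, IsCompact K →
    ∃ L : Set B, IsCompact L ∧ ∀ a ∈ K, ∀ b ∉ L, M ≤ φ a b

/-- Lemma 5.2 (`lem:phi12`): multiplying a class-`IC(A,B)` function by a strictly
positive lower semicontinuous function of the first variable stays in class `IC(A,B)`. -/
theorem stmt_13
    {A B : Type*} [MetricSpace A] [MetricSpace B]
    [MeasurableSpace A] [BorelSpace A] [MeasurableSpace B] [BorelSpace B]
    (φ₁ : A → B → ℝ)
    (hφ₁nn : ∀ a b, 0 ≤ φ₁ a b)
    (hφ₁meas : Measurable (fun p : A × B => φ₁ p.1 p.2))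
    (hφ₁IC : ClassIC2 φ₁)
    (φ₂ : A → ℝ)
    (hφ₂pos : ∀ a, 0 < φ₂ a)
    (hφ₂lsc : LowerSemicontinuous φ₂) :
    ClassIC2 (fun a b => φ₁ a b * φ₂ a) := by
  intro M hM K hK
  -- find a uniform lower bound c > 0 for φ₂ on K
  obtain ⟨n, hn⟩ : ∃ n : ℕ, ∀ a ∈ K, (1 : ℝ) / (n + 1) < φ₂ a := by
    have hcover : K ⊆ ⋃ n : ℕ, {a | (1 : ℝ) / (n + 1) < φ₂ a} := by
      intro a _
      obtain ⟨n, hn⟩ := exists_nat_one_div_lt (hφ₂pos a)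
      exact Set.mem_iUnion.2 ⟨n, hn⟩
    have hmono : Monotone (fun n : ℕ => {a : A | (1 : ℝ) / (n + 1) < φ₂ a}) := by
      intro m n hmn a ha
      have hle : (1 : ℝ) / (n + 1) ≤ 1 / (m + 1) := by
        apply div_le_div_of_nonneg_left one_pos.le (by positivity)
        exact_mod_cast add_le_add_left (Nat.cast_le.2 hmn) 1
      exact lt_of_le_of_lt hle ha
    obtain ⟨n, hn⟩ := hK.elim_directed_cover _
      (fun n => hφ₂lsc.isOpen_preimage _) hcover hmono.directed_le
    exact ⟨n, fun a ha => hn ha⟩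
  set c : ℝ := (1 : ℝ) / (n + 1) with hc
  have hcpos : 0 < c := by positivity
  obtain ⟨L, hL, hLbd⟩ := hφ₁IC (M / c) (div_pos hM hcpos) K hK
  refine ⟨L, hL, fun a ha b hb => ?_⟩
  have h1 := hLbd a ha b hb
  have h2 := hn a ha
  calc M = (M / c) * c := by field_simp
    _ ≤ φ₁ a b * φ₂ a :=
      mul_le_mul h1 h2.le hcpos.le (le_trans (div_pos hM hcpos).le h1)
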